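/- (Evaluation of the basic invariant in the second case of intermediate degeneration, formulas (6.13)–(6.15)) Let r, s, σ : ℝ → ℝ be smooth and let U = {(x,y) ∈ ℝ² : x > 0}. Define on U the canonical coefficients P = 0, Q = −5/(12·x), R = r(y) + x^{−1/4}, S = σ(y)·x^{5/4} − 4·s(y)·x + (4/3)·x² − 12·r(y)·x^{3/4} − 4·x^{1/2}. Define N = Q, Ω = R_{1.0} − 2·Q_{0.1} and Λ = −2·R_{1.0} + 3·Q_{0.1} + (6/5)·Q·R. Then on U: Ω = −x^{−5/4}/4, Λ = −r(y)/(2·x), and the scalar invariant I₁ = Λ¹²/(Ω⁸·N²) equals (2304/25)·r(y)¹². In particular, I₁ is constant on U if and only if r is constant. -/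

import Mathlib

noncomputable section

open Real

/-- Partial derivative in the first argument (`f_{1.0}`). -/
def pdx (f : ℝ → ℝ → ℝ) : ℝ → ℝ → ℝ := fun x y => deriv (fun t => f t y) x

/-- Partial derivative in the second argument (`f_{0.1}`). -/
def pdy (f : ℝ → ℝ → ℝ) : ℝ → ℝ → ℝ := fun x y => deriv (fun t => f x t) y

/-- Indexed partial derivative: `0 ↦ ∂/∂x`, `1 ↦ ∂/∂y`. -/
def pd (i : Fin 2) (f : ℝ → ℝ → ℝ) : ℝ → ℝ → ℝ := if i = 0 then pdx f else pdy f

/-- Smoothness of a two-variable real function on a set `U ⊆ ℝ²`. -/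
def Smooth2 (U : Set (ℝ × ℝ)) (f : ℝ → ℝ → ℝ) : Prop :=
  ContDiffOn ℝ (⊤ : ℕ∞) (Function.uncurry f) U

/-- The quantity `A` of formula (1.6). -/
def coefA (P Q R S : ℝ → ℝ → ℝ) : ℝ → ℝ → ℝ := fun x y =>
  pdy (pdy P) x y - 2 * pdx (pdy Q) x y + pdx (pdx R) x y
    + 2 * P x y * pdx S x y + S x y * pdx P x y
    - 3 * P x y * pdy R x y - 3 * R x y * pdy P x y
    - 3 * Q x y * pdx R x y + 6 * Q x y * pdy Q x y

/-- The quantity `B` of formula (1.6). -/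
def coefB (P Q R S : ℝ → ℝ → ℝ) : ℝ → ℝ → ℝ := fun x y =>
  pdx (pdx S) x y - 2 * pdx (pdy R) x y + pdy (pdy Q) x y
    - 2 * S x y * pdy P x y - P x y * pdy S x y
    + 3 * S x y * pdx Q x y + 3 * Q x y * pdx S x y
    + 3 * R x y * pdy Q x y - 6 * R x y * pdx R x y

/-- Evaluation of the basic invariant `I₁ = Λ¹²/(Ω⁸·N²)` in the second case of
intermediate degeneration (formulas (6.13)–(6.15)). -/
theorem second_case_invariant_I1
    (r s σ : ℝ → ℝ)
    (hr : ContDiff ℝ (⊤ : ℕ∞) r) (hs : ContDiff ℝ (⊤ : ℕ∞) s)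
    (hσ : ContDiff ℝ (⊤ : ℕ∞) σ) :
    let U : Set (ℝ × ℝ) := {p | 0 < p.1}
    let P : ℝ → ℝ → ℝ := fun _ _ => 0
    let Q : ℝ → ℝ → ℝ := fun x _ => -5 / (12 * x)
    let R : ℝ → ℝ → ℝ := fun x y => r y + x ^ (-(1:ℝ)/4)
    let S : ℝ → ℝ → ℝ := fun x y =>
      σ y * x ^ ((5:ℝ)/4) - 4 * s y * x + (4/3) * x^2
        - 12 * r y * x ^ ((3:ℝ)/4) - 4 * x ^ ((1:ℝ)/2)
    let N : ℝ → ℝ → ℝ := Q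
    let Ω : ℝ → ℝ → ℝ := fun x y => pdx R x y - 2 * pdy Q x y
    let Λ : ℝ → ℝ → ℝ := fun x y =>
      -2 * pdx R x y + 3 * pdy Q x y + (6/5) * Q x y * R x y
    let I1 : ℝ → ℝ → ℝ := fun x y => (Λ x y)^12 / ((Ω x y)^8 * (N x y)^2)
    (∀ x y : ℝ, (x, y) ∈ U →
        Ω x y = -(x ^ (-(5:ℝ)/4)) / 4 ∧
        Λ x y = -(r y) / (2 * x) ∧
        I1 x y = (2304/25) * (r y)^12) ∧
    ((∀ p ∈ U, ∀ q ∈ U, I1 p.1 p.2 = I1 q.1 q.2) ↔ ∀ a b : ℝ, r a = r b) := by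
  intro U P Q R S N Ω Λ I1
  have key : ∀ x y : ℝ, (x, y) ∈ U →
      Ω x y = -(x ^ (-(5:ℝ)/4)) / 4 ∧
      Λ x y = -(r y) / (2 * x) ∧
      I1 x y = (2304/25) * (r y)^12 := by
    intro x y hx
    have hx0 : (0:ℝ) < x := hx
    have hx' : x ≠ 0 := ne_of_gt hx0
    -- pdx R
    have hR : pdx R x y = -(1/4) * x ^ (-(5:ℝ)/4) := by
      have h1 : HasDerivAt (fun t : ℝ => r y + t ^ (-(1:ℝ)/4))
          (0 + (-(1:ℝ)/4) * x ^ (-(1:ℝ)/4 - 1)) x :=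
        (hasDerivAt_const x (r y)).add (Real.hasDerivAt_rpow_const (Or.inl hx'))
      have : pdx R x y = 0 + (-(1:ℝ)/4) * x ^ (-(1:ℝ)/4 - 1) := h1.deriv
      rw [this]
      norm_num
    have hQy : pdy Q x y = 0 := by
      simp [pdy, Q]
    have hΩ : Ω x y = -(x ^ (-(5:ℝ)/4)) / 4 := by
      show pdx R x y - 2 * pdy Q x y = _
      rw [hR, hQy]; ring
    -- relation x * x^(-5/4) = x^(-1/4)
    have hrel : x * x ^ (-(5:ℝ)/4) = x ^ (-(1:ℝ)/4) := by
      rw [show x * x ^ (-(5:ℝ)/4) = x ^ (1:ℝ) * x ^ (-(5:ℝ)/4) by rw [Real.rpow_one],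
        ← Real.rpow_add hx0]
      norm_num
    have hΛ : Λ x y = -(r y) / (2 * x) := by
      show -2 * pdx R x y + 3 * pdy Q x y + (6/5) * Q x y * R x y = _
      rw [hR, hQy]
      show -2 * (-(1/4) * x ^ (-(5:ℝ)/4)) + 3 * 0
          + (6/5) * (-5 / (12 * x)) * (r y + x ^ (-(1:ℝ)/4)) = -(r y) / (2 * x)
      field_simp
      simp only [neg_div] at hrel ⊢
      linear_combination (48 : ℝ) * hrel
    refine ⟨hΩ, hΛ, ?_⟩
    have hx10 : (x:ℝ)^(10:ℕ) ≠ 0 := pow_ne_zero _ hx'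
    have h8 : (x ^ (-(5:ℝ)/4)) ^ (8:ℕ) * x ^ (10:ℕ) = 1 := by
      rw [← Real.rpow_natCast (x ^ (-(5:ℝ)/4)) 8, ← Real.rpow_mul hx0.le,
        ← Real.rpow_natCast x 10, ← Real.rpow_add hx0]
      norm_num
    show (Λ x y)^12 / ((Ω x y)^8 * (N x y)^2) = (2304/25) * (r y)^12
    rw [hΛ, hΩ]
    show (-(r y) / (2 * x)) ^ 12 / ((-(x ^ (-(5:ℝ)/4)) / 4) ^ 8 * (-5 / (12 * x)) ^ 2)
        = (2304/25) * (r y)^12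
    have ht0 : x ^ (-(5:ℝ)/4) ≠ 0 := (Real.rpow_pos_of_pos hx0 _).ne'
    have hne : ((-(x ^ (-(5:ℝ)/4)) / 4) ^ 8 * (-5 / (12 * x)) ^ 2) ≠ 0 :=
      mul_ne_zero (pow_ne_zero _ (div_ne_zero (neg_ne_zero.2 ht0) (by norm_num)))
        (pow_ne_zero _ (div_ne_zero (by norm_num)
          (mul_ne_zero (by norm_num) hx')))
    rw [div_eq_iff hne]
    field_simp
    simp only [neg_div] at h8 ⊢
    linear_combination (-235929600 : ℝ) * (r y)^12 * h8
  constructor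
  · exact key
  constructor
  · -- I1 constant → r constant
    intro h
    -- first: 12th powers agree
    have hp : ∀ a b : ℝ, (r a) ^ 12 = (r b) ^ 12 := by
      intro a b
      have h1 := h (1, a) (by norm_num [U]) (1, b) (by norm_num [U])
      have ka := (key 1 a (by norm_num [U])).2.2
      have kb := (key 1 b (by norm_num [U])).2.2
      simp only at h1
      rw [ka, kb] at h1
      linarith
    have habs : ∀ a b : ℝ, |r a| = |r b| := by
      intro a b
      refine (pow_left_strictMonoOn₀ (n := 12) (by norm_num)).injOn
        (Set.mem_Ici.2 (abs_nonneg _)) (Set.mem_Ici.2 (abs_nonneg _)) ?_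
      simp only [pow_abs, hp a b]
    intro a b
    by_contra hne
    have h1 : r a = -(r b) := by
      rcases abs_eq_abs.1 (habs a b) with h | h
      · exact absurd h hne
      · simpa using h
    have hb0 : r b ≠ 0 := by
      intro h0
      apply hne
      simp [h1, h0]
    -- 0 lies between r a and r b, IVT gives a zero of r
    have hcont : Continuous r := hr.continuous
    have hzero : ∃ c, r c = 0 := by
      rcases lt_or_gt_of_ne hb0 with hlt | hgt
      · have h0 : (0:ℝ) ∈ Set.Icc (r b) (r a) := by
          refine ⟨hlt.le, ?_⟩
          rw [h1]; linarith
        rcases intermediate_value_univ b a hcont h0 with ⟨c, hc⟩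
        exact ⟨c, hc⟩
      · have h0 : (0:ℝ) ∈ Set.Icc (r a) (r b) := by
          refine ⟨?_, hgt.le⟩
          rw [h1]; linarith
        rcases intermediate_value_univ a b hcont h0 with ⟨c, hc⟩
        exact ⟨c, hc⟩
    rcases hzero with ⟨c, hc⟩
    have := habs c b
    rw [hc, abs_zero] at this
    exact hb0 (abs_eq_zero.1 this.symm)
  · -- r constant → I1 constant
    intro h p hp q hq
    rw [(key p.1 p.2 hp).2.2, (key q.1 q.2 hq).2.2, h p.2 q.2]
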